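/- Let P₁, P₂ ⊆ ℝⁿ be full-dimensional anti-blocking polytopes. Then the n-dimensional Lebesgue volume of the Minkowski difference satisfies vol(P₁ − P₂) = Σ_{J ⊆ [n]} vol_{|J|}(π_J(P₁|_J)) · vol_{n−|J|}(π_{Jᶜ}(P₂|_{Jᶜ})), where π_J : ℝⁿ → ℝ^J is the coordinate projection onto the coordinates in J, vol_k denotes k-dimensional Lebesgue measure, and the 0-dimensional volume of a nonempty set is 1. -/

import Mathlib

open Set Pointwise MeasureTheory

/-- `Q ⊆ ℝⁿ` is anti-blocking: contained in the nonnegative orthant and down-closed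
within it. -/
def IsAntiBlocking {n : ℕ} (Q : Set (Fin n → ℝ)) : Prop :=
  (∀ x ∈ Q, ∀ i, 0 ≤ x i) ∧
  ∀ q ∈ Q, ∀ p : Fin n → ℝ, (∀ i, 0 ≤ p i ∧ p i ≤ q i) → p ∈ Q

/-- `Q` is a polytope: the convex hull of a finite set. -/
def IsPolytope {n : ℕ} (Q : Set (Fin n → ℝ)) : Prop :=
  ∃ V : Finset (Fin n → ℝ), Q = convexHull ℝ (V : Set (Fin n → ℝ))

/-- The face `Q|_J = {x ∈ Q : x_j = 0 for j ∉ J}` of an anti-blocking polytope. -/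
def restrictTo {n : ℕ} (Q : Set (Fin n → ℝ)) (J : Finset (Fin n)) :
    Set (Fin n → ℝ) :=
  {x ∈ Q | ∀ j ∉ J, x j = 0}

/-- Coordinate projection `π_J : ℝⁿ → ℝ^J`. -/
def projTo {n : ℕ} (J : Finset (Fin n)) (x : Fin n → ℝ) : {i // i ∈ J} → ℝ :=
  fun j => x j.1

section Aux

variable {n : ℕ}

/-- The positive part of `x` supported on `J`. -/
def posP (J : Finset (Fin n)) (x : Fin n → ℝ) : Fin n → ℝ :=
  fun i => if i ∈ J then x i else 0

/-- The negative part of `x` supported off `J`. -/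
def negP (J : Finset (Fin n)) (x : Fin n → ℝ) : Fin n → ℝ :=
  fun i => if i ∈ J then 0 else -x i

/-- The piece of `P₁ - P₂` in the orthant determined by `J`. -/
def TSet (P₁ P₂ : Set (Fin n → ℝ)) (J : Finset (Fin n)) : Set (Fin n → ℝ) :=
  {x | posP J x ∈ restrictTo P₁ J ∧ negP J x ∈ restrictTo P₂ Jᶜ}

lemma TSet_eq (P₁ P₂ : Set (Fin n → ℝ)) (h₁ab : IsAntiBlocking P₁) (h₂ab : IsAntiBlocking P₂)
    (J : Finset (Fin n)) :
    TSet P₁ P₂ J = (P₁ - P₂) ∩ {x | (∀ i ∈ J, 0 ≤ x i) ∧ ∀ i ∉ J, x i ≤ 0} := by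
  ext x
  constructor
  · rintro ⟨⟨hp, hp0⟩, hq, hq0⟩
    refine ⟨Set.mem_sub.mpr ⟨posP J x, hp, negP J x, hq, ?_⟩, ?_, ?_⟩
    · funext i
      by_cases hi : i ∈ J <;> simp [posP, negP, hi]
    · intro i hi
      have := h₁ab.1 _ hp i
      simpa [posP, hi] using this
    · intro i hi
      have := h₂ab.1 _ hq i
      simp only [negP, if_neg hi] at this
      linarith
  · rintro ⟨hx, hsign₁, hsign₂⟩
    obtain ⟨p, hp, q, hq, rfl⟩ := Set.mem_sub.mp hx
    have hp0 := h₁ab.1 _ hp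
    have hq0 := h₂ab.1 _ hq
    refine ⟨⟨h₁ab.2 _ hp _ fun i => ?_, fun j hj => if_neg hj⟩,
      h₂ab.2 _ hq _ fun i => ?_, fun j hj => ?_⟩
    · by_cases hi : i ∈ J
      · simp only [posP, if_pos hi]
        refine ⟨hsign₁ i hi, ?_⟩
        have := hq0 i
        simp only [Pi.sub_apply]
        linarith
      · simp only [posP, if_neg hi]
        exact ⟨le_refl 0, hp0 i⟩
    · by_cases hi : i ∈ J
      · simp only [negP, if_pos hi]
        exact ⟨le_refl 0, hq0 i⟩
      · simp only [negP, if_neg hi, Pi.sub_apply]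
        have h1 := hsign₂ i hi
        have h2 := hp0 i
        simp only [Pi.sub_apply] at h1
        exact ⟨by linarith, by linarith⟩
    · simp only [Finset.mem_compl, not_not] at hj
      exact if_pos hj

lemma iUnion_TSet (P₁ P₂ : Set (Fin n → ℝ)) (h₁ab : IsAntiBlocking P₁)
    (h₂ab : IsAntiBlocking P₂) :
    ⋃ J : Finset (Fin n), TSet P₁ P₂ J = P₁ - P₂ := by
  classical
  apply Set.Subset.antisymm
  · exact Set.iUnion_subset fun J => by
      rw [TSet_eq P₁ P₂ h₁ab h₂ab]; exact Set.inter_subset_left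
  · intro x hx
    refine Set.mem_iUnion.mpr ⟨Finset.univ.filter (fun i => 0 ≤ x i), ?_⟩
    rw [TSet_eq P₁ P₂ h₁ab h₂ab]
    refine ⟨hx, fun i hi => (Finset.mem_filter.mp hi).2, fun i hi => ?_⟩
    have h : ¬ 0 ≤ x i := fun h => hi (Finset.mem_filter.mpr ⟨Finset.mem_univ i, h⟩)
    linarith [lt_of_not_ge h]

lemma isCompact_restrictTo {P : Set (Fin n → ℝ)} (hP : IsCompact P) (J : Finset (Fin n)) :
    IsCompact (restrictTo P J) := by
  have hclosed : IsClosed {x : Fin n → ℝ | ∀ j ∉ J, x j = 0} := by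
    have h : {x : Fin n → ℝ | ∀ j ∉ J, x j = 0} = ⋂ j ∈ {j | j ∉ J}, {x : Fin n → ℝ | x j = 0} := by
      ext x; simp
    rw [h]
    exact isClosed_biInter fun j _ => isClosed_eq (continuous_apply j) continuous_const
  exact hP.inter_right hclosed

lemma volume_TSet (P₁ P₂ : Set (Fin n → ℝ)) (hc₁ : IsCompact P₁) (hc₂ : IsCompact P₂)
    (J : Finset (Fin n)) :
    volume (TSet P₁ P₂ J) =
      volume (projTo J '' restrictTo P₁ J) * volume (projTo Jᶜ '' restrictTo P₂ Jᶜ) := by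
  classical
  have hR₁ : IsCompact (restrictTo P₁ J) := isCompact_restrictTo hc₁ J
  have hR₂ : IsCompact (restrictTo P₂ Jᶜ) := isCompact_restrictTo hc₂ Jᶜ
  have hA : IsCompact (projTo J '' restrictTo P₁ J) :=
    hR₁.image (continuous_pi fun j => continuous_apply j.1)
  have hB : IsCompact (projTo Jᶜ '' restrictTo P₂ Jᶜ) :=
    hR₂.image (continuous_pi fun j => continuous_apply j.1)
  set e := MeasurableEquiv.piEquivPiSubtypeProd (fun _ : Fin n => ℝ) (· ∈ J) with he
  set f : {i : Fin n // i ∈ Jᶜ} ≃ {i : Fin n // ¬ i ∈ J} :=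
    Equiv.subtypeEquivRight (fun i => by simp) with hf
  set κ := MeasurableEquiv.piCongrLeft (fun _ : {i : Fin n // ¬ i ∈ J} => ℝ) f with hκ
  set ψ : ({i : Fin n // ¬ i ∈ J} → ℝ) → ({i : Fin n // i ∈ Jᶜ} → ℝ) :=
    fun g => κ.symm (-g) with hψ
  have hψ_apply : ∀ (g : {i : Fin n // ¬ i ∈ J} → ℝ) (i : {i : Fin n // i ∈ Jᶜ}),
      ψ g i = -g ⟨i.1, Finset.mem_compl.mp i.2⟩ := fun g i => rfl
  set B' : Set ({i : Fin n // ¬ i ∈ J} → ℝ) := ψ ⁻¹' (projTo Jᶜ '' restrictTo P₂ Jᶜ) with hB'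
  -- Step 1 : `TSet = e ⁻¹' (A ×ˢ B')`
  have hT : TSet P₁ P₂ J = e ⁻¹' ((projTo J '' restrictTo P₁ J) ×ˢ B') := by
    ext x
    simp only [Set.mem_preimage, Set.mem_prod, hB', TSet, Set.mem_setOf_eq]
    constructor
    · rintro ⟨h₁, h₂⟩
      constructor
      · refine ⟨posP J x, h₁, ?_⟩
        funext i
        show posP J x i.1 = (e x).1 i
        have : (e x).1 i = x i.1 := rfl
        rw [this]
        simp [posP, i.2]
      · refine ⟨negP J x, h₂, ?_⟩
        funext i
        have hi : i.1 ∉ J := Finset.mem_compl.mp i.2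
        show negP J x i.1 = ψ (e x).2 i
        rw [hψ_apply]
        have : (e x).2 ⟨i.1, hi⟩ = x i.1 := rfl
        rw [this]
        simp [negP, hi]
    · rintro ⟨⟨y, hy, hxy⟩, ⟨z, hz, hxz⟩⟩
      constructor
      · have : posP J x = y := by
          funext i
          by_cases hi : i ∈ J
          · have h := congrFun hxy ⟨i, hi⟩
            simp only [projTo] at h
            have h' : (e x).1 ⟨i, hi⟩ = x i := rfl
            rw [h'] at h
            simpa [posP, hi] using h.symm
          · simp [posP, hi, hy.2 i hi]
        rw [this]; exact hy
      · have : negP J x = z := by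
          funext i
          by_cases hi : i ∈ J
          · have hiz : i ∉ Jᶜ := by simp [hi]
            simp [negP, hi, hz.2 i hiz]
          · have h := congrFun hxz ⟨i, Finset.mem_compl.mpr hi⟩
            rw [hψ_apply] at h
            simp only [projTo] at h
            have h' : (e x).2 ⟨i, hi⟩ = x i := rfl
            rw [h'] at h
            simp only [negP, if_neg hi]
            linarith [h]
        rw [this]; exact hz
  -- measurability
  have hAm : MeasurableSet (projTo J '' restrictTo P₁ J) := hA.isClosed.measurableSet
  have hBm : MeasurableSet (projTo Jᶜ '' restrictTo P₂ Jᶜ) := hB.isClosed.measurableSet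
  have hψ_mp : MeasurePreserving ψ volume volume := by
    exact ((volume_measurePreserving_piCongrLeft (fun _ => ℝ) f).symm κ).comp
      (Measure.measurePreserving_neg volume)
  have hB'm : MeasurableSet B' := hψ_mp.measurable hBm
  -- Step 2 : compute the volume
  rw [hT, (volume_preserving_piEquivPiSubtypeProd (fun _ : Fin n => ℝ)
      (· ∈ J)).measure_preimage ((hAm.prod hB'm).nullMeasurableSet)]
  rw [Measure.volume_eq_prod, Measure.prod_prod,
    show volume B' = volume (projTo Jᶜ '' restrictTo P₂ Jᶜ) from
      hψ_mp.measure_preimage hBm.nullMeasurableSet]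
  congr!

end Aux

/-- For full-dimensional anti-blocking polytopes `P₁, P₂ ⊆ ℝⁿ`,
`vol(P₁ − P₂) = ∑_{J ⊆ [n]} vol_{|J|}(π_J(P₁|_J)) · vol_{n−|J|}(π_{Jᶜ}(P₂|_{Jᶜ}))`
(each factor is the Lebesgue volume in the corresponding coordinate subspace;
the `0`-dimensional volume of a nonempty set is `1`). -/
theorem volume_antiBlocking_sub
    {n : ℕ} (P₁ P₂ : Set (Fin n → ℝ))
    (h₁poly : IsPolytope P₁) (h₁ab : IsAntiBlocking P₁)
    (h₁full : (interior P₁).Nonempty)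
    (h₂poly : IsPolytope P₂) (h₂ab : IsAntiBlocking P₂)
    (h₂full : (interior P₂).Nonempty) :
    volume (P₁ - P₂) =
      ∑ J : Finset (Fin n),
        volume (projTo J '' restrictTo P₁ J) *
        volume (projTo Jᶜ '' restrictTo P₂ Jᶜ) := by
  classical
  obtain ⟨V₁, hV₁⟩ := h₁poly
  obtain ⟨V₂, hV₂⟩ := h₂poly
  have hc₁ : IsCompact P₁ := by rw [hV₁]; exact V₁.finite_toSet.isCompact_convexHull ℝ
  have hc₂ : IsCompact P₂ := by rw [hV₂]; exact V₂.finite_toSet.isCompact_convexHull ℝ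
  have hS : IsCompact (P₁ - P₂) := by
    rw [sub_eq_add_neg]; exact hc₁.add hc₂.neg
  have hsign : ∀ J : Finset (Fin n),
      MeasurableSet {x : Fin n → ℝ | (∀ i ∈ J, 0 ≤ x i) ∧ ∀ i ∉ J, x i ≤ 0} := by
    intro J
    have h1 : MeasurableSet {x : Fin n → ℝ | ∀ i ∈ J, 0 ≤ x i} := by
      rw [show {x : Fin n → ℝ | ∀ i ∈ J, 0 ≤ x i} = ⋂ i, ⋂ (_ : i ∈ J), {x | 0 ≤ x i} by
        ext x; simp]
      exact MeasurableSet.iInter fun i => MeasurableSet.iInter fun _ =>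
        measurableSet_le measurable_const (measurable_pi_apply i)
    have h2 : MeasurableSet {x : Fin n → ℝ | ∀ i ∉ J, x i ≤ 0} := by
      rw [show {x : Fin n → ℝ | ∀ i ∉ J, x i ≤ 0} = ⋂ i, ⋂ (_ : i ∉ J), {x | x i ≤ 0} by
        ext x; simp]
      exact MeasurableSet.iInter fun i => MeasurableSet.iInter fun _ =>
        measurableSet_le (measurable_pi_apply i) measurable_const
    exact h1.inter h2
  have hmeas : ∀ J : Finset (Fin n), MeasurableSet (TSet P₁ P₂ J) := by
    intro J
    rw [TSet_eq P₁ P₂ h₁ab h₂ab]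
    exact (hS.isClosed.measurableSet).inter (hsign J)
  have hdisj : Pairwise (Function.onFun (AEDisjoint volume) fun J => TSet P₁ P₂ J) := by
    intro J K hJK
    obtain ⟨i, hi⟩ := Finset.symmDiff_nonempty.mpr hJK
    rw [Finset.mem_symmDiff] at hi
    refine measure_mono_null (fun x hx => ?_)
      (show volume {x : Fin n → ℝ | x i = 0} = 0 by
        rw [volume_pi]; exact Measure.pi_hyperplane _ i 0)
    obtain ⟨hxJ, hxK⟩ := hx
    change x ∈ TSet P₁ P₂ J at hxJ
    change x ∈ TSet P₁ P₂ K at hxK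
    rw [TSet_eq P₁ P₂ h₁ab h₂ab] at hxJ hxK
    rcases hi with ⟨hiJ, hiK⟩ | ⟨hiK, hiJ⟩
    · exact le_antisymm (hxK.2.2 i hiK) (hxJ.2.1 i hiJ)
    · exact le_antisymm (hxJ.2.2 i hiJ) (hxK.2.1 i hiK)
  rw [← iUnion_TSet P₁ P₂ h₁ab h₂ab,
    measure_iUnion₀ hdisj (fun J => (hmeas J).nullMeasurableSet), tsum_fintype]
  exact Finset.sum_congr rfl fun J _ => volume_TSet P₁ P₂ hc₁ hc₂ J
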